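/- In the toy case of quadratic terms: for any polynomial function 𝓕 expressed as a polynomial in variables S₂, S₃, …, substituting S_n = ∑_{l≥1}(1/l!)(n−1)_{l−1} ∑_{k₁+⋯+k_l=n} R_{k₁}⋯R_{k_l} yields, for integers l₁, l₂ ≥ 2: (∂²𝓕/∂R_{l₁}∂R_{l₂})|_{R=0} = (∂²𝓕/∂S_{l₁}∂S_{l₂})|_{S=0} + (l₁+l₂−1)·(∂𝓕/∂S_{l₁+l₂})|_{S=0}. -/

import Mathlib

open Finset MvPolynomial

/-- The expansion of the functional `S_n` in the free cumulants:
`S_n = ∑_{l≥1} (1/l!) (n−1)_{l−1} ∑_{k₁+⋯+k_l=n, kᵢ≥2} R_{k₁}⋯R_{k_l}`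
(terms with some `kᵢ = 1` vanish since `R₁ = 0`); variable `k` of the polynomial
ring is `R_k`. -/
noncomputable def subS (n : ℕ) : MvPolynomial ℕ ℚ :=
  ∑ l ∈ Finset.Icc 1 n,
    C (((n - 1).descFactorial (l - 1) : ℚ) / (Nat.factorial l)) *
      ∑ c ∈ (Finset.Nat.antidiagonalTuple l n).filter (fun c => ∀ i, 2 ≤ c i),
        ∏ i, X (c i)

noncomputable def wdeg : (ℕ →₀ ℕ) →+ ℕ := Finsupp.weight (fun _ => 1)

lemma wdeg_single (k m : ℕ) : wdeg (Finsupp.single k m) = m := by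
  simp [wdeg, Finsupp.weight, Finsupp.linearCombination_single]

lemma prodX {l : ℕ} (c : Fin l → ℕ) :
    (∏ i, X (c i) : MvPolynomial ℕ ℚ) = monomial (∑ i, Finsupp.single (c i) 1) 1 := by
  rw [monomial_sum_one]
  rfl

lemma wdeg_dc {l : ℕ} (c : Fin l → ℕ) : wdeg (∑ i, Finsupp.single (c i) 1) = l := by
  rw [map_sum]
  simp [wdeg_single]

lemma ev0_monomial (d : ℕ →₀ ℕ) (a : ℚ) :
    eval (fun _ => (0:ℚ)) (monomial d a) = if d = 0 then a else 0 := by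
  rw [eval_monomial]
  rcases eq_or_ne d 0 with h | h
  · simp [h]
  · rw [if_neg h]
    obtain ⟨k, hk⟩ := Finsupp.ne_iff.mp h
    simp only [Finsupp.coe_zero, Pi.zero_apply] at hk
    rw [Finsupp.prod, Finset.prod_eq_zero (Finsupp.mem_support_iff.mpr hk) (by simp [zero_pow hk]),
      mul_zero]

lemma le_single_cases {d : ℕ →₀ ℕ} {k : ℕ} (h : d ≤ Finsupp.single k 1) :
    d = 0 ∨ d = Finsupp.single k 1 := by
  rcases Nat.le_one_iff_eq_zero_or_eq_one.mp
      (le_trans (Finsupp.le_def.mp h k) (by simp)) with h0 | h1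
  · left
    ext j
    rcases eq_or_ne j k with rfl | hj
    · exact h0
    · have := Finsupp.le_def.mp h j
      simp [Finsupp.single_apply, Ne.symm hj] at this
      simpa using this
  · right
    ext j
    rcases eq_or_ne j k with rfl | hj
    · simpa using h1
    · have := Finsupp.le_def.mp h j
      simp [Finsupp.single_apply, Ne.symm hj] at this
      simpa [Finsupp.single_apply, Ne.symm hj] using this

lemma ev0_pderiv_monomial (k : ℕ) (d : ℕ →₀ ℕ) (a : ℚ) :
    eval (fun _ => (0:ℚ)) (pderiv k (monomial d a)) =
      if d = Finsupp.single k 1 then a else 0 := by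
  rw [pderiv_monomial, ev0_monomial]
  rcases eq_or_ne d (Finsupp.single k 1) with rfl | h
  · simp
  · rw [if_neg h]
    split_ifs with h0
    · rcases le_single_cases (tsub_eq_zero_iff_le.mp h0) with rfl | rfl
      · simp
      · exact absurd rfl h
    · rfl

lemma ev0_pderiv2_monomial (l₁ l₂ : ℕ) (d : ℕ →₀ ℕ) (a : ℚ) :
    eval (fun _ => (0:ℚ)) (pderiv l₁ (pderiv l₂ (monomial d a))) =
      if d = Finsupp.single l₁ 1 + Finsupp.single l₂ 1 then
        a * (1 + if l₁ = l₂ then 1 else 0) else 0 := by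
  rw [pderiv_monomial, ev0_pderiv_monomial]
  rcases eq_or_ne d (Finsupp.single l₁ 1 + Finsupp.single l₂ 1) with rfl | h
  · rw [if_pos rfl, if_pos (add_tsub_cancel_right _ _)]
    rcases eq_or_ne l₁ l₂ with rfl | h'
    · simp [Finsupp.add_apply, Finsupp.single_apply]
      left; ring
    · simp [Finsupp.add_apply, Finsupp.single_apply, h']
  · rw [if_neg h]
    split_ifs with h0
    · rcases Nat.eq_zero_or_pos (d l₂) with hz | hp
      · simp [hz]
      · have hle : Finsupp.single l₂ 1 ≤ d := by
          rw [Finsupp.le_def]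
          intro j
          rcases eq_or_ne j l₂ with rfl | hj
          · rw [Finsupp.single_eq_same]; omega
          · simp [Finsupp.single_apply, Ne.symm hj]
        exact absurd ((tsub_eq_iff_eq_add_of_le hle).mp h0) h
    · rfl

lemma single_add_single_eq {a b l₁ l₂ : ℕ} :
    Finsupp.single a 1 + Finsupp.single b 1 =
      Finsupp.single l₁ 1 + Finsupp.single l₂ (1:ℕ) ↔
    (a = l₁ ∧ b = l₂) ∨ (a = l₂ ∧ b = l₁) := by
  constructor
  · intro h
    have h1 := DFunLike.congr_fun h l₁
    simp only [Finsupp.add_apply, Finsupp.single_apply] at h1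
    have hab : a = l₁ ∨ b = l₁ := by
      by_contra hc
      push_neg at hc
      simp [hc.1, hc.2] at h1
      split_ifs at h1 <;> omega
    rcases hab with rfl | rfl
    · left
      refine ⟨rfl, ?_⟩
      have := add_left_cancel h
      exact Finsupp.single_left_injective one_ne_zero this
    · right
      refine ⟨?_, rfl⟩
      rw [add_comm (Finsupp.single a 1)] at h
      exact Finsupp.single_left_injective one_ne_zero (add_left_cancel h)
  · rintro (⟨rfl, rfl⟩ | ⟨rfl, rfl⟩)
    · rfl
    · exact add_comm _ _

lemma ev0_subS (n : ℕ) : eval (fun _ => (0:ℚ)) (subS n) = 0 := by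
  unfold subS
  rw [map_sum]
  apply Finset.sum_eq_zero
  intro l hl
  rw [map_mul, map_sum]
  rw [Finset.sum_eq_zero, mul_zero]
  intro c _
  rw [prodX, ev0_monomial, if_neg]
  intro h
  have := wdeg_dc c
  rw [h] at this
  simp at this
  have hl1 : 1 ≤ l := (Finset.mem_Icc.mp hl).1
  omega

lemma ev0_pderiv_subS {k : ℕ} (hk : 2 ≤ k) (n : ℕ) :
    eval (fun _ => (0:ℚ)) (pderiv k (subS n)) = if n = k then 1 else 0 := by
  unfold subS
  rw [map_sum, map_sum]
  rw [Finset.sum_congr rfl (g := fun l => if l = 1 then (if n = k then (1:ℚ) else 0) else 0)]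
  · rw [Finset.sum_ite_eq' (Finset.Icc 1 n) 1 (fun _ => if n = k then (1:ℚ) else 0)]
    rcases eq_or_ne n k with rfl | h
    · rw [if_pos (by simp; omega)]
    · simp [h]
  · intro l hl
    rw [pderiv_C_mul, map_mul, map_sum, map_sum, eval_C]
    rcases eq_or_ne l 1 with rfl | hl1
    · rw [if_pos rfl]
      rw [Finset.Nat.antidiagonalTuple_one, Finset.filter_singleton]
      by_cases h2 : 2 ≤ n
      · rw [if_pos (by simp [h2])]
        rw [Finset.sum_singleton, prodX, ev0_pderiv_monomial]
        simp only [Fin.sum_univ_one, Matrix.cons_val_zero]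
        rcases eq_or_ne n k with rfl | h
        · rw [if_pos rfl, if_pos rfl]
          simp
        · rw [if_neg (fun hh => h (Finsupp.single_left_injective one_ne_zero hh)), if_neg h,
            mul_zero]
      · rw [if_neg (by simp [h2])]
        rw [Finset.sum_empty, mul_zero, if_neg (by omega)]
    · rw [if_neg hl1]
      rw [Finset.sum_eq_zero, mul_zero]
      intro c _
      rw [prodX, ev0_pderiv_monomial, if_neg]
      intro h
      have := wdeg_dc c
      rw [h, wdeg_single] at this
      omega

lemma ev0_pderiv2_subS {l₁ l₂ : ℕ} (h₁ : 2 ≤ l₁) (h₂ : 2 ≤ l₂) (n : ℕ) :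
    eval (fun _ => (0:ℚ)) (pderiv l₁ (pderiv l₂ (subS n))) =
      if n = l₁ + l₂ then (l₁ + l₂ : ℚ) - 1 else 0 := by
  unfold subS
  rw [map_sum, map_sum, map_sum]
  rw [Finset.sum_congr rfl
    (g := fun l => if l = 2 then (if n = l₁ + l₂ then (l₁ + l₂ : ℚ) - 1 else 0) else 0)]
  · rw [Finset.sum_ite_eq' (Finset.Icc 1 n) 2]
    rcases eq_or_ne n (l₁ + l₂) with rfl | h
    · rw [if_pos (by simp; omega)]
    · simp [h]
  · intro l hl
    rw [pderiv_C_mul, pderiv_C_mul, map_mul, eval_C, map_sum, map_sum, map_sum]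
    rcases eq_or_ne l 2 with rfl | hl2
    · rw [if_pos rfl]
      rw [Finset.Nat.antidiagonalTuple_two, Finset.filter_map, Finset.sum_map]
      have key : ∀ p : ℕ × ℕ,
          eval (fun _ => (0:ℚ)) (pderiv l₁ (pderiv l₂
            (∏ i, X (((piFinTwoEquiv fun _ => ℕ).symm.toEmbedding p) i)))) =
          if (p = (l₁, l₂) ∨ p = (l₂, l₁)) then (1 + if l₁ = l₂ then (1:ℚ) else 0) else 0 := by
        intro p
        rw [prodX, ev0_pderiv2_monomial]
        simp only [Fin.sum_univ_two, Equiv.coe_toEmbedding, piFinTwoEquiv_symm_apply,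
          Matrix.cons_val_zero, Matrix.cons_val_one, Matrix.head_cons, one_mul,
          Fin.cons_zero, Fin.cons_one]
        have hiff : ((Finsupp.single p.1 1 + Finsupp.single p.2 1 =
            Finsupp.single l₁ 1 + Finsupp.single l₂ 1)) ↔
            (p = (l₁,l₂) ∨ p = (l₂,l₁)) := by
          simp [single_add_single_eq, Prod.ext_iff]
        by_cases hc : p = (l₁,l₂) ∨ p = (l₂,l₁)
        · rw [if_pos (hiff.mpr hc), if_pos hc]
        · rw [if_neg (fun hh => hc (hiff.mp hh)), if_neg hc]
      rw [Finset.sum_filter]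
      rw [Finset.sum_congr rfl (g := fun p =>
        if p = (l₁,l₂) ∨ p = (l₂,l₁) then (1 + if l₁ = l₂ then (1:ℚ) else 0) else 0)]
      · by_cases hll : l₁ = l₂
        · subst hll
          simp only [or_self, if_pos rfl]
          rw [Finset.sum_ite_eq' (Finset.HasAntidiagonal.antidiagonal n) ((l₁ : ℕ), l₁)]
          rcases eq_or_ne n (l₁ + l₁) with rfl | h
          · rw [if_pos (by simp [Finset.mem_antidiagonal]), if_pos rfl]
            rw [Nat.descFactorial_one]
            have : (1:ℕ) ≤ l₁ + l₁ := by omega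
            push_cast [Nat.cast_sub this]
            norm_num [Nat.factorial]
          · rw [if_neg (by simp [Finset.mem_antidiagonal]; omega), if_neg (by omega), mul_zero]
        · have split : ∀ p : ℕ × ℕ,
              (if p = (l₁,l₂) ∨ p = (l₂,l₁) then (1 + if l₁ = l₂ then (1:ℚ) else 0) else 0) =
              (if p = (l₁,l₂) then (1:ℚ) else 0) + (if p = (l₂,l₁) then (1:ℚ) else 0) := by
            intro p
            rw [if_neg hll]
            by_cases h1 : p = (l₁,l₂)
            · subst h1
              rw [if_pos (Or.inl rfl), if_pos rfl,
                if_neg (by simp [Prod.ext_iff]; omega)]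
            · by_cases h2 : p = (l₂,l₁)
              · subst h2
                rw [if_pos (Or.inr rfl), if_neg h1, if_pos rfl]
                norm_num
              · rw [if_neg (by tauto), if_neg h1, if_neg h2]
                norm_num
          rw [Finset.sum_congr rfl (fun p _ => split p), Finset.sum_add_distrib,
            Finset.sum_ite_eq' (Finset.HasAntidiagonal.antidiagonal n) ((l₁:ℕ), l₂),
            Finset.sum_ite_eq' (Finset.HasAntidiagonal.antidiagonal n) ((l₂:ℕ), l₁)]
          rcases eq_or_ne n (l₁ + l₂) with rfl | h
          · rw [if_pos (by simp [Finset.mem_antidiagonal]),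
              if_pos (by simp [Finset.mem_antidiagonal]; omega), if_pos rfl,
              Nat.descFactorial_one]
            have : (1:ℕ) ≤ l₁ + l₂ := by omega
            push_cast [Nat.cast_sub this]
            norm_num [Nat.factorial]
          · rw [if_neg (by simp [Finset.mem_antidiagonal]; omega),
              if_neg (by simp [Finset.mem_antidiagonal]; omega), if_neg (by omega)]
            norm_num
      · intro p _
        rw [key p]
        simp only [Equiv.coe_toEmbedding, piFinTwoEquiv_symm_apply, Fin.forall_fin_two,
          Function.comp_apply, Fin.cons_zero, Fin.cons_one]
        by_cases hc : p = (l₁,l₂) ∨ p = (l₂,l₁)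
        · have hpre : 2 ≤ p.1 ∧ 2 ≤ p.2 := by
            rcases hc with rfl | rfl <;> exact ⟨by assumption, by assumption⟩
          rw [if_pos hpre]
        · rw [if_neg hc]
          split_ifs <;> rfl
    · rw [if_neg hl2]
      rw [Finset.sum_eq_zero, mul_zero]
      intro c _
      rw [prodX, ev0_pderiv2_monomial, if_neg]
      intro h
      have := wdeg_dc c
      rw [h, map_add, wdeg_single, wdeg_single] at this
      omega

lemma pderiv2_X (k j n : ℕ) : pderiv k (pderiv j (X n : MvPolynomial ℕ ℚ)) = 0 := by
  rcases eq_or_ne n j with rfl | h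
  · rw [pderiv_X_self, pderiv_one]
  · rw [pderiv_X_of_ne h, map_zero]

lemma ev0_pderiv_X (k n : ℕ) :
    eval (fun _ => (0:ℚ)) (pderiv k (X n)) = if n = k then 1 else 0 := by
  rcases eq_or_ne n k with rfl | h
  · simp
  · rw [pderiv_X_of_ne h]
    simp [h]

lemma ev0_aeval (p : MvPolynomial ℕ ℚ) :
    eval (fun _ => (0:ℚ)) (aeval subS p) = eval (fun _ => (0:ℚ)) p := by
  induction p using MvPolynomial.induction_on with
  | C a => simp only [aeval_C, algebraMap_eq, eval_C]
  | add p q hp hq => simp only [map_add, hp, hq]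
  | mul_X p n hp =>
    rw [map_mul, aeval_X, eval_mul, ev0_subS, mul_zero, eval_mul, eval_X]
    simp

lemma ev0_pderiv_aeval {k : ℕ} (hk : 2 ≤ k) (p : MvPolynomial ℕ ℚ) :
    eval (fun _ => (0:ℚ)) (pderiv k (aeval subS p)) =
      eval (fun _ => (0:ℚ)) (pderiv k p) := by
  induction p using MvPolynomial.induction_on with
  | C a => simp only [aeval_C, algebraMap_eq, pderiv_C, map_zero]
  | add p q hp hq => simp only [map_add, hp, hq]
  | mul_X p n hp =>
    rw [map_mul, aeval_X]
    simp only [pderiv_mul, map_add, eval_mul, eval_add]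
    rw [ev0_subS, ev0_pderiv_subS hk, ev0_aeval, ev0_pderiv_X, eval_X]
    simp

/-- Let `𝓕` be a polynomial in the variables `S₂, S₃, …`. Substituting
`S_n = ∑_{l≥1}(1/l!)(n−1)_{l−1} ∑_{k₁+⋯+k_l=n} R_{k₁}⋯R_{k_l}` yields, for `l₁, l₂ ≥ 2`:
`(∂²𝓕/∂R_{l₁}∂R_{l₂})|₀ = (∂²𝓕/∂S_{l₁}∂S_{l₂})|₀ + (l₁+l₂−1)·(∂𝓕/∂S_{l₁+l₂})|₀`. -/
theorem second_derivative_substitution (F : MvPolynomial ℕ ℚ)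
    (l₁ l₂ : ℕ) (h₁ : 2 ≤ l₁) (h₂ : 2 ≤ l₂) :
    eval (fun _ => (0 : ℚ)) (pderiv l₁ (pderiv l₂ (aeval subS F))) =
      eval (fun _ => (0 : ℚ)) (pderiv l₁ (pderiv l₂ F)) +
        ((l₁ : ℚ) + l₂ - 1) * eval (fun _ => (0 : ℚ)) (pderiv (l₁ + l₂) F) := by
  induction F using MvPolynomial.induction_on with
  | C a => simp only [aeval_C, algebraMap_eq, pderiv_C, map_zero, add_zero, mul_zero]
  | add p q hp hq =>
    simp only [map_add, eval_add]
    rw [hp, hq]; ring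
  | mul_X p n hp =>
    rw [map_mul, aeval_X]
    simp only [pderiv_mul, map_add, eval_mul, eval_add]
    rw [ev0_subS, ev0_pderiv_subS h₁, ev0_pderiv_subS h₂, ev0_pderiv2_subS h₁ h₂,
      ev0_pderiv_aeval h₁ p, ev0_pderiv_aeval h₂ p, ev0_aeval]
    rw [ev0_pderiv_X l₁ n, ev0_pderiv_X l₂ n, ev0_pderiv_X (l₁ + l₂) n, eval_X, pderiv2_X l₁ l₂ n]
    simp only [show (fun _ => (0:ℚ)) n = 0 from rfl, map_zero, mul_zero, zero_add, add_zero, zero_mul]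
    split_ifs <;> first | ring | (exfalso; omega)
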